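/- The least model of the fuzzy program P equals the least fixed point of the immediate-consequence operator T_P: lm(P) = lfp(T_P), where lm(P) is the pointwise infimum of all models of P and lfp(T_P) is the Knaster–Tarski least fixed point of the monotone operator T_P on the complete lattice of interpretations. -/

import Mathlib

/-- A fuzzy clause: a head atom, a finite tuple of body atoms, and an
aggregation operator over truth values. -/
structure FuzzyClause (A : Type*) (L : Type*) where
  n : ℕ
  head : A
  body : Fin n → A
  agg : (Fin n → L) → L

/-- A fuzzy program: a set of facts and a set of clauses whose aggregation
operators are monotone (w.r.t. the pointwise order on argument tuples). -/
structure FuzzyProgram (A : Type*) (L : Type*) [CompleteLattice L] where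
  facts : Set (A × L)
  clauses : Set (FuzzyClause A L)
  agg_mono : ∀ c ∈ clauses, Monotone c.agg

variable {A : Type*} {L : Type*} [CompleteLattice L]

/-- `I` is a model of `P` with default assignment `d`. -/
def IsModel (d : A → L) (P : FuzzyProgram A L) (I : A → L) : Prop :=
  (∀ a, d a ≤ I a) ∧
  (∀ p ∈ P.facts, p.2 ≤ I p.1) ∧
  (∀ c ∈ P.clauses, c.agg (fun i => I (c.body i)) ≤ I c.head)

/-- The immediate-consequence operator `T_P`. -/
def TP (d : A → L) (P : FuzzyProgram A L) (I : A → L) : A → L :=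
  fun a =>
    d a ⊔ sSup {v | (a, v) ∈ P.facts} ⊔
      sSup {w | ∃ c ∈ P.clauses, c.head = a ∧ w = c.agg (fun i => I (c.body i))}

lemma isModel_iff_prefixed (d : A → L) (P : FuzzyProgram A L) (I : A → L) :
    IsModel d P I ↔ TP d P I ≤ I := by
  constructor
  · rintro ⟨h1, h2, h3⟩ a
    simp only [TP, sup_le_iff, sSup_le_iff, Set.mem_setOf_eq]
    refine ⟨⟨h1 a, fun v hv => h2 (a, v) hv⟩, ?_⟩
    rintro w ⟨c, hc, rfl, rfl⟩
    exact h3 c hc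
  · intro h
    refine ⟨fun a => le_trans (le_sup_of_le_left le_sup_left) (h a),
      fun p hp => le_trans ?_ (h p.1), fun c hc => le_trans ?_ (h c.head)⟩
    · exact le_trans (le_sSup hp) (le_sup_of_le_left le_sup_right)
    · exact le_trans
        (le_sSup (show _ ∈ {w | ∃ c' ∈ P.clauses, c'.head = c.head ∧
          w = c'.agg fun i => I (c'.body i)} from ⟨c, hc, rfl, rfl⟩)) le_sup_right

/-- The least model of `P` (the pointwise infimum of all models) equals the
Knaster–Tarski least fixed point of the immediate-consequence operator `T_P`. -/
theorem least_model_eq_lfp (d : A → L) (P : FuzzyProgram A L)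
    (hm : Monotone (TP d P)) :
    (fun a => ⨅ I ∈ {I : A → L | IsModel d P I}, I a) =
      OrderHom.lfp ⟨TP d P, hm⟩ := by
  have : {I : A → L | IsModel d P I} = {I | TP d P I ≤ I} := by
    ext I; exact isModel_iff_prefixed d P I
  rw [this, OrderHom.lfp]
  funext a
  exact le_antisymm (le_iInf fun f => iInf_le_of_le f.1 (iInf_le _ f.2))
    (le_iInf fun I => le_iInf fun hI => by exact sInf_le (α := A → L) hI a)
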